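/- There exists a function ll : ℚ → ℚ → ℚ such that for all a, a', b, b' ∈ ℚ: ll a b < ll a' b' if and only if (a ≤ 0 and a < a'), or (a = a' and a ≤ 0 and b < b'), or (0 < a and 0 < a' and b < b'). -/

import Mathlib

noncomputable section

abbrev LLType := ({q : ℚ // q ≤ 0} ×ₗ ℚ) ⊕ₗ ℚ

noncomputable instance : LinearOrder LLType := by unfold LLType; infer_instance

instance : Countable LLType :=
  inferInstanceAs (Countable (({q : ℚ // q ≤ 0} × ℚ) ⊕ ℚ))

noncomputable def llEmb : LLType ↪o ℚ :=
  (Order.embedding_from_countable_to_dense LLType ℚ).some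

noncomputable def llFun (a b : ℚ) : LLType :=
  if h : a ≤ 0 then toLex (Sum.inl (toLex (⟨a, h⟩, b))) else toLex (Sum.inr b)

/-- An ll operation. -/
theorem exists_ll_operation :
    ∃ ll : ℚ → ℚ → ℚ, ∀ a a' b b' : ℚ,
      ll a b < ll a' b' ↔
        ((a ≤ 0 ∧ a < a') ∨ (a = a' ∧ a ≤ 0 ∧ b < b') ∨ (0 < a ∧ 0 < a' ∧ b < b')) := by
  refine ⟨fun a b => llEmb (llFun a b), fun a a' b b' => ?_⟩
  rw [llEmb.lt_iff_lt]
  unfold llFun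
  by_cases h : a ≤ 0 <;> by_cases h' : a' ≤ 0
  · rw [dif_pos h, dif_pos h', Sum.Lex.inl_lt_inl_iff, Prod.Lex.lt_iff]
    simp only [ofLex_toLex, Subtype.mk_lt_mk, Subtype.mk.injEq]
    constructor
    · rintro (hlt | ⟨rfl, hb⟩)
      · exact Or.inl ⟨h, hlt⟩
      · exact Or.inr (Or.inl ⟨rfl, h, hb⟩)
    · rintro (⟨_, hlt⟩ | ⟨rfl, _, hb⟩ | ⟨ha, _, _⟩)
      · exact Or.inl hlt
      · exact Or.inr ⟨rfl, hb⟩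
      · exact absurd h (not_le.mpr ha)
  · rw [dif_pos h, dif_neg h']
    exact iff_of_true (Sum.Lex.inl_lt_inr _ _)
      (Or.inl ⟨h, lt_of_le_of_lt h (not_le.mp h')⟩)
  · rw [dif_neg h, dif_pos h']
    refine iff_of_false Sum.Lex.not_inr_lt_inl ?_
    rintro (⟨ha, _⟩ | ⟨rfl, ha, _⟩ | ⟨_, ha', _⟩)
    · exact h ha
    · exact h ha
    · exact absurd h' (not_le.mpr ha')
  · rw [dif_neg h, dif_neg h', Sum.Lex.inr_lt_inr_iff]
    constructor
    · intro hb; exact Or.inr (Or.inr ⟨not_le.mp h, not_le.mp h', hb⟩)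
    · rintro (⟨ha, _⟩ | ⟨_, ha, _⟩ | ⟨_, _, hb⟩)
      · exact absurd ha h
      · exact absurd ha h
      · exact hb

end
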